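/- arXiv:2509.24991 — 3 statements merged into one kernel-verified Lean document; each statement's English description precedes it below -/
import Mathlib

section
/- Let H be a real inner product space, n ≥ 1, and for i = 1,…,n let u_i, v_i ∈ H and r_i ∈ ℝ; let γ ∈ ℝ and λ > 0. Define matrices K, C ∈ ℝ^{n×n} by K_{ij} = ⟨u_i, u_j⟩ and C_{ij} = ⟨v_i, u_j⟩, and let r = (r_1,…,r_n) ∈ ℝⁿ. Suppose the matrix K + λ·n·I − γ·C is invertible and set b = (K + λ·n·I − γ·C)⁻¹ r. Then the element f̂ = Σ_{j=1}^n b_j · u_j ∈ H satisfies the normal equation (1/n)·Σ_{i=1}^n (⟨f̂,u_i⟩ − r_i − γ·⟨f̂,v_i⟩)·u_i + λ·f̂ = 0, i.e., f̂ is the fixed-point minimizer of the regularized TD least-squares objective. -/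
open scoped BigOperators
open Matrix

/-- Proposition 4.1: the representer-theorem closed form of the kernel
TD estimator. With Gram matrix `K`, cross-Gram matrix `C`, and
`b = (K + λ n I − γ C)⁻¹ r`, the element `f̂ = Σ_j b_j • u_j` satisfies the KRR-TD normal
equation. -/
theorem krr_td_closed_form_solves_normal_equation
    {H : Type*} [NormedAddCommGroup H] [InnerProductSpace ℝ H]
    (n : ℕ) (hn : 1 ≤ n) (u v : Fin n → H) (r : Fin n → ℝ)
    (γ lam : ℝ) (hlam : 0 < lam)
    (K C : Matrix (Fin n) (Fin n) ℝ)
    (hK : ∀ i j, K i j = (inner ℝ (u i) (u j) : ℝ))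
    (hC : ∀ i j, C i j = (inner ℝ (v i) (u j) : ℝ))
    (hA : IsUnit (K + (lam * (n : ℝ)) • (1 : Matrix (Fin n) (Fin n) ℝ) - γ • C))
    (b : Fin n → ℝ)
    (hb : b = (K + (lam * (n : ℝ)) • (1 : Matrix (Fin n) (Fin n) ℝ) - γ • C)⁻¹ *ᵥ r)
    (fhat : H) (hfhat : fhat = ∑ j, b j • u j) :
    (1 / (n : ℝ)) •
        (∑ i, ((inner ℝ fhat (u i) : ℝ) - r i - γ * (inner ℝ fhat (v i) : ℝ)) • u i)
      + lam • fhat = 0 := by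
  have hn' : (n : ℝ) ≠ 0 := Nat.cast_ne_zero.mpr (by omega)
  set A : Matrix (Fin n) (Fin n) ℝ :=
    K + (lam * (n : ℝ)) • (1 : Matrix (Fin n) (Fin n) ℝ) - γ • C with hAdef
  have hAb : A *ᵥ b = r := by
    rw [hb, Matrix.mulVec_mulVec,
      Matrix.mul_nonsing_inv _ ((Matrix.isUnit_iff_isUnit_det A).mp hA),
      Matrix.one_mulVec]
  have h1 : ∀ i, (inner ℝ fhat (u i) : ℝ) = (K *ᵥ b) i := by
    intro i
    rw [hfhat, sum_inner]
    simp only [Matrix.mulVec, dotProduct, real_inner_smul_left, hK]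
    exact Finset.sum_congr rfl fun j _ => by rw [real_inner_comm]; ring
  have h2 : ∀ i, (inner ℝ fhat (v i) : ℝ) = (C *ᵥ b) i := by
    intro i
    rw [hfhat, sum_inner]
    simp only [Matrix.mulVec, dotProduct, real_inner_smul_left, hC]
    exact Finset.sum_congr rfl fun j _ => by rw [real_inner_comm]; ring
  have hcoef : ∀ i, (inner ℝ fhat (u i) : ℝ) - r i - γ * (inner ℝ fhat (v i) : ℝ)
      = -(lam * (n : ℝ) * b i) := by
    intro i
    have := congrFun hAb i
    simp only [hAdef, Matrix.sub_mulVec, Matrix.add_mulVec, Matrix.smul_mulVec,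
      Matrix.one_mulVec, Pi.sub_apply, Pi.add_apply, Pi.smul_apply, smul_eq_mul] at this
    rw [h1, h2]
    linarith
  calc (1 / (n : ℝ)) •
        (∑ i, ((inner ℝ fhat (u i) : ℝ) - r i - γ * (inner ℝ fhat (v i) : ℝ)) • u i)
      + lam • fhat
      = (1 / (n : ℝ)) • (∑ i, (-(lam * (n : ℝ) * b i)) • u i) + lam • fhat := by
        congr 1
        congr 1
        exact Finset.sum_congr rfl fun i _ => by rw [hcoef i]
    _ = -(lam • fhat) + lam • fhat := by
        rw [hfhat, Finset.smul_sum, Finset.smul_sum, ← Finset.sum_neg_distrib]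
        congr 1
        refine Finset.sum_congr rfl fun i _ => ?_
        rw [smul_smul, smul_smul, ← neg_smul]
        congr 1
        field_simp
    _ = 0 := neg_add_cancel _
end

section
/- Let H be a real inner product space, n ≥ 1, and for i = 1,…,n let u_i, v_i ∈ H and r_i ∈ ℝ; let γ ∈ ℝ and λ > 0. Let f̂ ∈ H satisfy the normal equation (1/n)·Σ_{i=1}^n (⟨f̂,u_i⟩ − r_i − γ·⟨f̂,v_i⟩)·u_i + λ·f̂ = 0. Let Q ∈ H be arbitrary, define the residuals ε_i = r_i + γ·⟨Q,v_i⟩ − ⟨Q,u_i⟩ and the difference D = f̂ − Q. Then the following identity holds: (1/n)·Σ_{i=1}^n ( ⟨D,u_i⟩² − γ·⟨D,u_i⟩·⟨D,v_i⟩ ) = (1/n)·Σ_{i=1}^n ε_i·⟨D,u_i⟩ − λ·⟨D, f̂⟩. -/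
open scoped BigOperators

/-- Proposition 4.2: the statistical–approximation error decomposition
for the KRR-TD estimator `f̂`, with Bellman residuals `ε_i` and difference `D = f̂ − Q`. -/
theorem krr_td_error_decomposition
    {H : Type*} [NormedAddCommGroup H] [InnerProductSpace ℝ H]
    (n : ℕ) (hn : 1 ≤ n) (u v : Fin n → H) (r : Fin n → ℝ)
    (γ lam : ℝ) (hlam : 0 < lam) (fhat : H)
    (hnormal :
      (1 / (n : ℝ)) •
          (∑ i, ((inner ℝ fhat (u i) : ℝ) - r i - γ * (inner ℝ fhat (v i) : ℝ)) • u i)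
        + lam • fhat = 0)
    (Q : H) (ε : Fin n → ℝ)
    (hε : ∀ i, ε i = r i + γ * (inner ℝ Q (v i) : ℝ) - (inner ℝ Q (u i) : ℝ))
    (D : H) (hD : D = fhat - Q) :
    (1 / (n : ℝ)) *
        ∑ i, ((inner ℝ D (u i) : ℝ) ^ 2 - γ * (inner ℝ D (u i) : ℝ) * (inner ℝ D (v i) : ℝ))
      = (1 / (n : ℝ)) * ∑ i, ε i * (inner ℝ D (u i) : ℝ) - lam * (inner ℝ D fhat : ℝ) := by
  have h := congrArg (fun x => (inner ℝ D x : ℝ)) hnormal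
  simp only [inner_add_right, real_inner_smul_right, inner_sum, inner_zero_right] at h
  -- rewrite everything in terms of inner D
  have hDu : ∀ i, (inner ℝ fhat (u i) : ℝ) = (inner ℝ D (u i) : ℝ) + (inner ℝ Q (u i) : ℝ) := by
    intro i; rw [hD, inner_sub_left]; ring
  have hDv : ∀ i, (inner ℝ fhat (v i) : ℝ) = (inner ℝ D (v i) : ℝ) + (inner ℝ Q (v i) : ℝ) := by
    intro i; rw [hD, inner_sub_left]; ring
  simp only [hDu, hDv, hε] at h ⊢
  have hsum :
      (∑ i, ((inner ℝ D (u i) : ℝ) ^ 2 - γ * (inner ℝ D (u i) : ℝ) * (inner ℝ D (v i) : ℝ)))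
        - ∑ i, (r i + γ * (inner ℝ Q (v i) : ℝ) - (inner ℝ Q (u i) : ℝ)) * (inner ℝ D (u i) : ℝ)
      = ∑ i, (((inner ℝ D (u i) : ℝ) + (inner ℝ Q (u i) : ℝ)) - r i -
            γ * ((inner ℝ D (v i) : ℝ) + (inner ℝ Q (v i) : ℝ))) * (inner ℝ D (u i) : ℝ) := by
    rw [← Finset.sum_sub_distrib]
    exact Finset.sum_congr rfl fun i _ => by ring
  linarith [h, congrArg (fun t => (1 / (n : ℝ)) * t) hsum]
end

section
/- Let (A, 𝔄) be a measurable space and let B > 0. Let q⁰ be a probability measure on A, and for each k ≥ 0 let f_k : A → ℝ be a bounded measurable function with sup_a |f_k(a)| ≤ B, let Δ_k > 0, and define recursively q^{k+1} as the Gibbs tilt of q^k by Δ_k·f_k (i.e., q^{k+1} has q^k-density e^{Δ_k f_k}/∫e^{Δ_k f_k}dq^k). For each k let g_k : A → ℝ be a bounded measurable function with sup_a |g_k(a)| ≤ B. Let p be a probability measure with p ≪ q⁰ and KL(p‖q⁰) < ∞. Then for every integer N ≥ 1: inf_{0 ≤ k < N} ∫ g_k d(p − q^k) ≤ [ KL(p‖q⁰)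 + Σ_{k=0}^{N−1} ( 2·Δ_k·sup_a|f_k(a) − g_k(a)| + Δ_k²·2·B² ) ] / ( Σ_{k=0}^{N−1} Δ_k ). -/
open MeasureTheory Real

lemma my_integrable_of_bdd {A : Type*} [MeasurableSpace A] (ν : Measure A) [IsFiniteMeasure ν]
    {h : A → ℝ} (hm : Measurable h) {C : ℝ} (hC : ∀ a, |h a| ≤ C) : Integrable h ν :=
  Integrable.mono' (integrable_const C) hm.aestronglyMeasurable
    (Filter.Eventually.of_forall fun a => by simpa [Real.norm_eq_abs] using hC a)

lemma my_llr_nonneg {A : Type*} [MeasurableSpace A] (p ν : Measure A)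
    [IsProbabilityMeasure p] [IsProbabilityMeasure ν] (h : p ≪ ν)
    (hint : Integrable (llr p ν) p) : 0 ≤ ∫ a, llr p ν a ∂p := by
  set r : A → ℝ := fun a => (ν.rnDeriv p a).toReal with hr
  have hrint : Integrable r p := by
    refine integrable_toReal_of_lintegral_ne_top (ν.measurable_rnDeriv p).aemeasurable ?_
    exact ((Measure.lintegral_rnDeriv_le).trans_lt (measure_lt_top ν _)).ne
  have hrle : ∫ a, r a ∂p ≤ 1 := by
    rw [hr, integral_toReal (ν.measurable_rnDeriv p).aemeasurable (ν.rnDeriv_lt_top p)]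
    calc (∫⁻ a, ν.rnDeriv p a ∂p).toReal ≤ (ν Set.univ).toReal :=
          ENNReal.toReal_mono (by simp) Measure.lintegral_rnDeriv_le
      _ = 1 := by simp
  have hae : ∀ᵐ a ∂p, 1 - r a ≤ llr p ν a := by
    filter_upwards [Measure.inv_rnDeriv h, Measure.rnDeriv_pos h,
      h.ae_le (p.rnDeriv_lt_top ν)] with a hinv hpos hlt
    have ht : 0 < (p.rnDeriv ν a).toReal := ENNReal.toReal_pos hpos.ne' hlt.ne
    have hra : r a = (p.rnDeriv ν a).toReal⁻¹ := by
      rw [hr]; simp only [← hinv, Pi.inv_apply, ENNReal.toReal_inv]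
    have := Real.log_le_sub_one_of_pos (inv_pos.mpr ht)
    rw [Real.log_inv] at this
    have : 1 - (p.rnDeriv ν a).toReal⁻¹ ≤ Real.log (p.rnDeriv ν a).toReal := by linarith
    rw [hra]; exact this
  calc (0:ℝ) ≤ 1 - ∫ a, r a ∂p := by linarith
    _ = ∫ a, (1 - r a) ∂p := by
        rw [integral_sub (integrable_const 1) hrint]; simp
    _ ≤ ∫ a, llr p ν a ∂p := integral_mono_ae ((integrable_const 1).sub hrint) hint hae

lemma my_log_integral_exp_le {A : Type*} [MeasurableSpace A] (ν : Measure A)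
    [IsProbabilityMeasure ν] {f : A → ℝ} (hf : Measurable f) {B : ℝ} (hB : 0 < B)
    (hfB : ∀ a, |f a| ≤ B) {Δ : ℝ} (hΔ : 0 < Δ) :
    Real.log (∫ a, Real.exp (Δ * f a) ∂ν) ≤ Δ * (∫ a, f a ∂ν) + Δ ^ 2 * (2 * B ^ 2) := by
  set m := ∫ a, f a ∂ν with hm
  set c := 2 * Δ * B with hc
  have hc0 : 0 < c := by positivity
  have hfint : Integrable f ν := my_integrable_of_bdd ν hf hfB
  have hmB : |m| ≤ B := by
    rw [hm, ← Real.norm_eq_abs]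
    calc ‖∫ a, f a ∂ν‖ ≤ B * (ν Set.univ).toReal :=
        norm_integral_le_of_norm_le_const (Filter.Eventually.of_forall fun a => by
          simpa [Real.norm_eq_abs] using hfB a)
      _ = B := by simp
  have hpt : ∀ a, Real.exp (Δ * (f a - m)) ≤
      Real.cosh c + (Real.sinh c / c * Δ) * (f a - m) := by
    intro a
    have habs : |Δ * (f a - m) / c| ≤ 1 := by
      rw [abs_div, abs_of_pos hc0, div_le_one hc0, abs_mul, abs_of_pos hΔ, hc]
      have h1 : |f a - m| ≤ 2 * B := by
        calc |f a - m| ≤ |f a| + |m| := abs_sub _ _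
          _ ≤ B + B := add_le_add (hfB a) hmB
          _ = 2 * B := by ring
      calc Δ * |f a - m| ≤ Δ * (2 * B) := by nlinarith
        _ = 2 * Δ * B := by ring
    have h := exp_mul_le_cosh_add_mul_sinh habs c
    have h1 : Δ * (f a - m) / c * c = Δ * (f a - m) := by field_simp
    have h2 : Δ * (f a - m) / c * Real.sinh c = Real.sinh c / c * Δ * (f a - m) := by
      field_simp
    rw [h1, h2] at h
    exact h
  have hLint : Integrable (fun a => Real.exp (Δ * (f a - m))) ν := by
    refine my_integrable_of_bdd ν (by fun_prop) (C := Real.exp c) fun a => ?_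
    rw [abs_of_pos (Real.exp_pos _)]
    apply Real.exp_le_exp.mpr
    have : |Δ * (f a - m)| ≤ c := by
      rw [abs_mul, abs_of_pos hΔ, hc]
      have : |f a - m| ≤ 2 * B := by
        calc |f a - m| ≤ |f a| + |m| := abs_sub _ _
          _ ≤ B + B := add_le_add (hfB a) hmB
          _ = 2 * B := by ring
      nlinarith
    linarith [le_abs_self (Δ * (f a - m))]
  have hRint : Integrable (fun a => Real.cosh c + (Real.sinh c / c * Δ) * (f a - m)) ν :=
    (integrable_const _).add ((hfint.sub (integrable_const m)).const_mul _)
  have hI1le : (∫ a, Real.exp (Δ * (f a - m)) ∂ν) ≤ Real.cosh c := by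
    calc (∫ a, Real.exp (Δ * (f a - m)) ∂ν)
        ≤ ∫ a, (Real.cosh c + (Real.sinh c / c * Δ) * (f a - m)) ∂ν :=
          integral_mono hLint hRint hpt
      _ = Real.cosh c + (Real.sinh c / c * Δ) * ∫ a, (f a - m) ∂ν := by
          have h2 : Integrable (fun a => (Real.sinh c / c * Δ) * (f a - m)) ν := by
            exact (hfint.sub (integrable_const m)).const_mul _
          rw [integral_add (integrable_const _) h2, integral_const_mul, integral_const]
          simp
      _ = Real.cosh c := by
          rw [integral_sub hfint (integrable_const m), integral_const]
          simp [← hm]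
  have hI1pos : 0 < ∫ a, Real.exp (Δ * (f a - m)) ∂ν := integral_exp_pos hLint
  have hZ : (∫ a, Real.exp (Δ * f a) ∂ν)
      = Real.exp (Δ * m) * ∫ a, Real.exp (Δ * (f a - m)) ∂ν := by
    rw [← integral_const_mul]
    congr 1; funext a
    rw [← Real.exp_add]; ring_nf
  rw [hZ, Real.log_mul (Real.exp_ne_zero _) hI1pos.ne', Real.log_exp]
  have hlog : Real.log (∫ a, Real.exp (Δ * (f a - m)) ∂ν) ≤ Δ ^ 2 * (2 * B ^ 2) := by
    calc Real.log (∫ a, Real.exp (Δ * (f a - m)) ∂ν)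
        ≤ Real.log (Real.exp (c ^ 2 / 2)) := by
          apply Real.log_le_log hI1pos
          exact hI1le.trans (Real.cosh_le_exp_half_sq c)
      _ = c ^ 2 / 2 := Real.log_exp _
      _ = Δ ^ 2 * (2 * B ^ 2) := by rw [hc]; ring
  linarith

/-- The Kullback–Leibler divergence `KL(p‖q) = ∫ log (dp/dq) dp`, as a real number
(meaningful when `p ≪ q` and the log-density is `p`-integrable). -/
noncomputable def klDivergence {A : Type*} [MeasurableSpace A] (p q : Measure A) : ℝ :=
  ∫ a, Real.log ((p.rnDeriv q a).toReal) ∂p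

/-- The Gibbs tilt of a measure `q` by a function `g`: the measure with `q`-density
`e^{g} / ∫ e^{g} dq`. -/
noncomputable def gibbsTilt {A : Type*} [MeasurableSpace A] (q : Measure A) (g : A → ℝ) :
    Measure A :=
  q.withDensity fun a => ENNReal.ofReal (Real.exp (g a) / ∫ a, Real.exp (g a) ∂q)

/-- abstract mirror-descent regret bound underlying Theorem 5.2:
for iterates `q^{k+1}` obtained by Gibbs-tilting `q^k` by `Δ_k f_k`, and comparison
functions `g_k`, the smallest gap `∫ g_k d(p − q^k)` over `k < N` is bounded by
`(KL(p‖q⁰) + Σ_k (2 Δ_k sup|f_k − g_k| + 2 Δ_k² B²)) / Σ_k Δ_k`. -/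
theorem mirror_descent_regret_bound
    {A : Type*} [MeasurableSpace A] [Nonempty A] (B : ℝ) (hB : 0 < B)
    (q : ℕ → Measure A) (hq0 : IsProbabilityMeasure (q 0))
    (f : ℕ → A → ℝ) (hfmeas : ∀ k, Measurable (f k)) (hfB : ∀ k a, |f k a| ≤ B)
    (Δ : ℕ → ℝ) (hΔ : ∀ k, 0 < Δ k)
    (hrec : ∀ k, q (k + 1) = gibbsTilt (q k) fun a => Δ k * f k a)
    (g : ℕ → A → ℝ) (hgmeas : ∀ k, Measurable (g k)) (hgB : ∀ k a, |g k a| ≤ B)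
    (p : Measure A) [IsProbabilityMeasure p] (hp : p ≪ q 0)
    (hKL : Integrable (fun a => Real.log ((p.rnDeriv (q 0) a).toReal)) p)
    (N : ℕ) (hN : 1 ≤ N) :
    ∃ k < N,
      (∫ a, g k a ∂p) - ∫ a, g k a ∂(q k)
        ≤ (klDivergence p (q 0)
            + ∑ k ∈ Finset.range N,
                (2 * Δ k * (⨆ a, |f k a - g k a|) + (Δ k) ^ 2 * (2 * B ^ 2)))
          / ∑ k ∈ Finset.range N, Δ k := by
  classical
  -- abbreviations
  have hZint : ∀ k, IsProbabilityMeasure (q k) →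
      Integrable (fun a => Real.exp (Δ k * f k a)) (q k) := by
    intro k hk
    exact my_integrable_of_bdd _ (by fun_prop) (C := Real.exp (Δ k * B)) fun a => by
      rw [abs_of_pos (Real.exp_pos _)]
      apply Real.exp_le_exp.mpr
      have := (abs_le.mp (hfB k a)).2
      nlinarith [(hΔ k).le]
  have hprob : ∀ k, IsProbabilityMeasure (q k) := by
    intro k
    induction k with
    | zero => exact hq0
    | succ k ih =>
      haveI := ih
      rw [hrec k]
      exact isProbabilityMeasure_tilted (hZint k ih)
  have hexp : ∀ k, Integrable (fun a => Real.exp (Δ k * f k a)) (q k) :=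
    fun k => hZint k (hprob k)
  have hac : ∀ k, p ≪ q k := by
    intro k
    induction k with
    | zero => exact hp
    | succ k ih =>
      rw [hrec k]
      exact ih.trans (absolutelyContinuous_tilted (hexp k))
  have hΔfp : ∀ k, Integrable (fun a => Δ k * f k a) p :=
    fun k => my_integrable_of_bdd _ (by fun_prop) (C := Δ k * B) fun a => by
      rw [abs_mul, abs_of_pos (hΔ k)]
      exact mul_le_mul_of_nonneg_left (hfB k a) (hΔ k).le
  have hKLint : ∀ k, Integrable (llr p (q k)) p := by
    intro k
    induction k with
    | zero => exact hKL
    | succ k ih =>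
      haveI := hprob k
      rw [hrec k]
      exact integrable_llr_tilted_right (hac k) (hΔfp k) ih (hexp k)
  -- per-step identity and bound
  set KL : ℕ → ℝ := fun k => ∫ a, llr p (q k) a ∂p with hKLdef
  have hstep : ∀ k, KL (k + 1)
      = KL k - Δ k * (∫ a, f k a ∂p) + Real.log (∫ a, Real.exp (Δ k * f k a) ∂(q k)) := by
    intro k
    haveI := hprob k
    rw [hKLdef]
    simp only
    rw [hrec k]
    rw [show (gibbsTilt (q k) fun a => Δ k * f k a) = (q k).tilted fun a => Δ k * f k a from rfl]
    rw [integral_llr_tilted_right (hac k) (hΔfp k) (hexp k) (hKLint k)]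
    rw [integral_const_mul]
  have hlogZ : ∀ k, Real.log (∫ a, Real.exp (Δ k * f k a) ∂(q k))
      ≤ Δ k * (∫ a, f k a ∂(q k)) + (Δ k) ^ 2 * (2 * B ^ 2) := by
    intro k
    haveI := hprob k
    exact my_log_integral_exp_le (q k) (hfmeas k) hB (hfB k) (hΔ k)
  -- sup bounds
  set S : ℕ → ℝ := fun k => ⨆ a, |f k a - g k a| with hSdef
  have hSbdd : ∀ k, BddAbove (Set.range fun a => |f k a - g k a|) := by
    intro k
    refine ⟨2 * B, ?_⟩
    rintro x ⟨a, rfl⟩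
    calc |f k a - g k a| ≤ |f k a| + |g k a| := abs_sub _ _
      _ ≤ B + B := add_le_add (hfB k a) (hgB k a)
      _ = 2 * B := by ring
  have hS : ∀ k a, |f k a - g k a| ≤ S k := fun k a => le_ciSup (hSbdd k) a
  -- gap comparison
  set G : ℕ → ℝ := fun k => (∫ a, g k a ∂p) - ∫ a, g k a ∂(q k) with hGdef
  have hkey : ∀ k, Δ k * G k ≤ KL k - KL (k + 1) + (2 * Δ k * S k + (Δ k) ^ 2 * (2 * B ^ 2)) := by
    intro k
    haveI := hprob k
    have hfp : Integrable (f k) p := my_integrable_of_bdd _ (hfmeas k) (hfB k)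
    have hgp : Integrable (g k) p := my_integrable_of_bdd _ (hgmeas k) (hgB k)
    have hfq : Integrable (f k) (q k) := my_integrable_of_bdd _ (hfmeas k) (hfB k)
    have hgq : Integrable (g k) (q k) := my_integrable_of_bdd _ (hgmeas k) (hgB k)
    have h1 : (∫ a, g k a ∂p) ≤ (∫ a, f k a ∂p) + S k := by
      have : (∫ a, g k a ∂p) ≤ ∫ a, (f k a + S k) ∂p := by
        refine integral_mono hgp (hfp.add (integrable_const _)) fun a => ?_
        have h3 := hS k a
        have h4 := neg_abs_le (f k a - g k a)
        linarith
      rwa [integral_add hfp (integrable_const _), integral_const, probReal_univ,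
        smul_eq_mul, one_mul] at this
    have h2 : (∫ a, f k a ∂(q k)) ≤ (∫ a, g k a ∂(q k)) + S k := by
      have : (∫ a, f k a ∂(q k)) ≤ ∫ a, (g k a + S k) ∂(q k) := by
        refine integral_mono hfq (hgq.add (integrable_const _)) fun a => ?_
        have h3 := hS k a
        have h4 := le_abs_self (f k a - g k a)
        linarith
      rwa [integral_add hgq (integrable_const _), integral_const, probReal_univ,
        smul_eq_mul, one_mul] at this
    have hG2 : G k ≤ ((∫ a, f k a ∂p) - ∫ a, f k a ∂(q k)) + 2 * S k := by
      rw [hGdef]; simp only; linarith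
    have hstepk := hstep k
    have hlogk := hlogZ k
    have h5 : Δ k * ((∫ a, f k a ∂p) - ∫ a, f k a ∂(q k))
        ≤ KL k - KL (k + 1) + (Δ k) ^ 2 * (2 * B ^ 2) := by nlinarith
    have hSnn : 0 ≤ S k := (abs_nonneg _).trans (hS k Classical.ofNonempty)
    nlinarith [mul_le_mul_of_nonneg_left hG2 (hΔ k).le]
  -- sum up
  have hsum : ∑ k ∈ Finset.range N, Δ k * G k
      ≤ KL 0 + ∑ k ∈ Finset.range N, (2 * Δ k * S k + (Δ k) ^ 2 * (2 * B ^ 2)) := by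
    have htel : ∑ k ∈ Finset.range N, (KL k - KL (k + 1)) = KL 0 - KL N :=
      Finset.sum_range_sub' KL N
    have h6 : ∑ k ∈ Finset.range N, Δ k * G k
        ≤ ∑ k ∈ Finset.range N,
            ((KL k - KL (k + 1)) + (2 * Δ k * S k + (Δ k) ^ 2 * (2 * B ^ 2))) :=
      Finset.sum_le_sum fun k _ => hkey k
    rw [Finset.sum_add_distrib, htel] at h6
    haveI := hprob N
    have hKLN : 0 ≤ KL N := my_llr_nonneg p (q N) (hac N) (hKLint N)
    linarith
  -- conclude by contradiction
  by_contra hcon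
  push_neg at hcon
  set RHS := (klDivergence p (q 0)
      + ∑ k ∈ Finset.range N, (2 * Δ k * S k + (Δ k) ^ 2 * (2 * B ^ 2)))
      / ∑ k ∈ Finset.range N, Δ k with hRHSdef
  have hΔsum : 0 < ∑ k ∈ Finset.range N, Δ k :=
    Finset.sum_pos (fun k _ => hΔ k) ⟨0, Finset.mem_range.mpr hN⟩
  have hlt : (∑ k ∈ Finset.range N, Δ k) * RHS < ∑ k ∈ Finset.range N, Δ k * G k := by
    rw [Finset.sum_mul]
    refine Finset.sum_lt_sum_of_nonempty ⟨0, Finset.mem_range.mpr hN⟩ fun k hk => ?_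
    exact mul_lt_mul_of_pos_left (hcon k (Finset.mem_range.mp hk)) (hΔ k)
  have hKL0 : klDivergence p (q 0) = KL 0 := rfl
  rw [hRHSdef, mul_div_cancel₀ _ hΔsum.ne'] at hlt
  rw [hKL0] at hlt
  linarith
end
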